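/- Let d ≥ 1, let ψ, φ : ℝᵈ → ℝ be continuously differentiable, strictly convex functions such that ψ − φ is convex, and fix ξ ∈ ℝᵈ. For y ≠ 0, let λ(y) be the unique nonnegative real number satisfying φ(ξ/2 − y) + φ(ξ/2 + y) − 2φ(ξ/2) = ψ(ξ/2 − λ(y)y) + ψ(ξ/2 + λ(y)y) − 2ψ(ξ/2), and define T : ℝᵈ \ {0} → ℝᵈ by T(y) = λ(y)·y. Then T is injective, and for every c > 0, T restricts to a bijection from the set E_φ(ξ, c) = {y ∈ ℝᵈ : φ(ξ/2 − y) + φ(ξ/2 + y) − 2φ(ξ/2) = c} onto the set E_ψ(ξ, c) = {y ∈ ℝᵈ : ψ(ξ/2 − y) + ψ(ξ/2 + y) − 2ψ(ξ/2) = c}. -/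

import Mathlib

open MeasureTheory Filter

noncomputable section

section Aux

variable {E : Type*} [NormedAddCommGroup E] [NormedSpace ℝ E]

lemma aux_pos (f : E → ℝ) (hf : StrictConvexOn ℝ Set.univ f) (m y : E) (hy : y ≠ 0) :
    0 < f (m - y) + f (m + y) - 2 * f m := by
  have hne : m - y ≠ m + y := by
    intro h
    rw [sub_eq_add_neg, add_right_inj] at h
    apply hy
    have h2 : (2:ℝ) • y = 0 := by rw [two_smul]; nth_rewrite 1 [← h]; abel
    rcases smul_eq_zero.mp h2 with h3 | h3
    · norm_num at h3
    · exact h3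
  have hkey := hf.2 (Set.mem_univ (m - y)) (Set.mem_univ (m + y)) hne
    (by norm_num : (0:ℝ) < 1/2) (by norm_num : (0:ℝ) < 1/2) (by norm_num)
  have hmid : ((1:ℝ)/2) • (m - y) + ((1:ℝ)/2) • (m + y) = m := by module
  rw [hmid, smul_eq_mul, smul_eq_mul] at hkey
  linarith

lemma aux_le (f : E → ℝ) (hf : ConvexOn ℝ Set.univ f) (m z : E) {s t : ℝ}
    (hs : 0 ≤ s) (hst : s ≤ t) (ht : 0 < t) :
    f (m - s • z) + f (m + s • z) - 2 * f m ≤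
      (s / t) * (f (m - t • z) + f (m + t • z) - 2 * f m) := by
  have ha : 0 ≤ s / t := div_nonneg hs ht.le
  have hb : 0 ≤ 1 - s / t := by
    have : s / t ≤ 1 := (div_le_one ht).mpr hst
    linarith
  have hab : s / t + (1 - s / t) = 1 := by ring
  have h1 := hf.2 (Set.mem_univ (m - t • z)) (Set.mem_univ m) ha hb hab
  have h2 := hf.2 (Set.mem_univ (m + t • z)) (Set.mem_univ m) ha hb hab
  have e1 : (s / t) • (m - t • z) + (1 - s / t) • m = m - s • z := by
    match_scalars <;> field_simp <;> ring
  have e2 : (s / t) • (m + t • z) + (1 - s / t) • m = m + s • z := by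
    match_scalars <;> field_simp <;> ring
  rw [e1, smul_eq_mul, smul_eq_mul] at h1
  rw [e2, smul_eq_mul, smul_eq_mul] at h2
  nlinarith [h1, h2]

lemma aux_strict (f : E → ℝ) (hf : StrictConvexOn ℝ Set.univ f) (m z : E) (hz : z ≠ 0)
    {s t : ℝ} (hs : 0 ≤ s) (hst : s < t) :
    f (m - s • z) + f (m + s • z) - 2 * f m <
      f (m - t • z) + f (m + t • z) - 2 * f m := by
  have ht : 0 < t := lt_of_le_of_lt hs hst
  have hle := aux_le f hf.convexOn m z hs hst.le ht
  have hpos := aux_pos f hf m (t • z) (smul_ne_zero ht.ne' hz)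
  have hlt : s / t < 1 := (div_lt_one ht).mpr hst
  nlinarith

lemma aux_eq (f : E → ℝ) (hf : StrictConvexOn ℝ Set.univ f) (m z : E) (hz : z ≠ 0)
    {s t : ℝ} (hs : 0 ≤ s) (ht : 0 ≤ t)
    (h : f (m - s • z) + f (m + s • z) - 2 * f m =
      f (m - t • z) + f (m + t • z) - 2 * f m) : s = t := by
  rcases lt_trichotomy s t with h1 | h1 | h1
  · exact absurd h (ne_of_lt (aux_strict f hf m z hz hs h1))
  · exact h1
  · exact absurd h.symm (ne_of_lt (aux_strict f hf m z hz ht h1))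

end Aux

theorem statement13 (d : ℕ) (hd : 1 ≤ d)
    (ψ φ : EuclideanSpace ℝ (Fin d) → ℝ)
    (hψC1 : ContDiff ℝ 1 ψ) (hφC1 : ContDiff ℝ 1 φ)
    (hψsconv : StrictConvexOn ℝ Set.univ ψ) (hφsconv : StrictConvexOn ℝ Set.univ φ)
    (hdiffconv : ConvexOn ℝ Set.univ (fun x => ψ x - φ x))
    (ξ : EuclideanSpace ℝ (Fin d))
    (lam : EuclideanSpace ℝ (Fin d) → ℝ)
    (hlam : ∀ y : EuclideanSpace ℝ (Fin d), y ≠ 0 → 0 ≤ lam y ∧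
      φ ((2:ℝ)⁻¹ • ξ - y) + φ ((2:ℝ)⁻¹ • ξ + y) - 2 * φ ((2:ℝ)⁻¹ • ξ) =
        ψ ((2:ℝ)⁻¹ • ξ - lam y • y) + ψ ((2:ℝ)⁻¹ • ξ + lam y • y) -
          2 * ψ ((2:ℝ)⁻¹ • ξ))
    (T : EuclideanSpace ℝ (Fin d) → EuclideanSpace ℝ (Fin d))
    (hT : T = fun y => lam y • y) :
    Set.InjOn T {y | y ≠ 0} ∧
    ∀ c : ℝ, 0 < c →
      Set.BijOn T
        {y | φ ((2:ℝ)⁻¹ • ξ - y) + φ ((2:ℝ)⁻¹ • ξ + y) - 2 * φ ((2:ℝ)⁻¹ • ξ) = c}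
        {y | ψ ((2:ℝ)⁻¹ • ξ - y) + ψ ((2:ℝ)⁻¹ • ξ + y) - 2 * ψ ((2:ℝ)⁻¹ • ξ) = c} := by
  subst hT
  set m : EuclideanSpace ℝ (Fin d) := (2:ℝ)⁻¹ • ξ with hm
  have lam_pos : ∀ y : EuclideanSpace ℝ (Fin d), y ≠ 0 → 0 < lam y := by
    intro y hy
    obtain ⟨h0, heq⟩ := hlam y hy
    rcases h0.lt_or_eq with h | h
    · exact h
    · exfalso
      have hpos := aux_pos φ hφsconv m y hy
      rw [← h, zero_smul, sub_zero, add_zero] at heq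
      linarith
  have hinj : Set.InjOn (fun y => lam y • y) {y | y ≠ 0} := by
    intro y1 hy1 y2 hy2 heq
    simp only [Set.mem_setOf_eq] at hy1 hy2
    simp only at heq
    have ha := lam_pos y1 hy1
    have hb := lam_pos y2 hy2
    have hy2eq : (lam y1 / lam y2) • y1 = y2 := by
      rw [div_eq_mul_inv, mul_comm, mul_smul, heq, inv_smul_smul₀ hb.ne']
    have g1 := (hlam y1 hy1).2
    have g2 := (hlam y2 hy2).2
    rw [heq] at g1
    have gg : φ (m - y1) + φ (m + y1) - 2 * φ m = φ (m - y2) + φ (m + y2) - 2 * φ m := by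
      rw [g1, g2]
    have h1 : (1:ℝ) = lam y1 / lam y2 := by
      apply aux_eq φ hφsconv m y1 hy1 zero_le_one (le_of_lt (by positivity))
      rw [one_smul, hy2eq]
      exact gg
    rw [← hy2eq, ← h1, one_smul]
  refine ⟨hinj, ?_⟩
  intro c hc
  have hsub : {y : EuclideanSpace ℝ (Fin d) |
      φ (m - y) + φ (m + y) - 2 * φ m = c} ⊆ {y | y ≠ 0} := by
    intro y hy
    simp only [Set.mem_setOf_eq] at hy ⊢
    intro h0
    rw [h0, sub_zero, add_zero] at hy
    linarith
  refine ⟨?_, hinj.mono hsub, ?_⟩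
  · intro y hy
    have hy0 : y ≠ 0 := hsub hy
    simp only [Set.mem_setOf_eq] at hy ⊢
    rw [← (hlam y hy0).2]
    exact hy
  · intro z hz
    simp only [Set.mem_setOf_eq] at hz
    have hz0 : z ≠ 0 := by
      intro h0; rw [h0, sub_zero, add_zero] at hz; linarith
    have hB := aux_pos φ hφsconv m z hz0
    set t₀ : ℝ := max 1 (c / (φ (m - z) + φ (m + z) - 2 * φ m)) with ht₀def
    have ht₀1 : (1:ℝ) ≤ t₀ := le_max_left _ _
    have ht₀pos : 0 < t₀ := by linarith
    have hgrow : c ≤ φ (m - t₀ • z) + φ (m + t₀ • z) - 2 * φ m := by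
      have hle := aux_le φ hφsconv.convexOn m z zero_le_one ht₀1 ht₀pos
      rw [one_smul] at hle
      have h2 := mul_le_mul_of_nonneg_left hle ht₀pos.le
      rw [← mul_assoc, mul_one_div, div_self ht₀pos.ne', one_mul] at h2
      have h3 : c ≤ t₀ * (φ (m - z) + φ (m + z) - 2 * φ m) := by
        have hmax : c / (φ (m - z) + φ (m + z) - 2 * φ m) ≤ t₀ := le_max_right _ _
        calc c = (c / (φ (m - z) + φ (m + z) - 2 * φ m)) *
            (φ (m - z) + φ (m + z) - 2 * φ m) := by field_simp
          _ ≤ t₀ * (φ (m - z) + φ (m + z) - 2 * φ m) :=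
            mul_le_mul_of_nonneg_right hmax hB.le
      linarith
    have hcont : ContinuousOn
        (fun t : ℝ => φ (m - t • z) + φ (m + t • z) - 2 * φ m) (Set.Icc 0 t₀) := by
      have hφc := hφC1.continuous
      apply Continuous.continuousOn
      fun_prop
    have hivt := intermediate_value_Icc ht₀pos.le hcont
    have hc_mem : c ∈ Set.Icc
        ((fun t : ℝ => φ (m - t • z) + φ (m + t • z) - 2 * φ m) 0)
        ((fun t : ℝ => φ (m - t • z) + φ (m + t • z) - 2 * φ m) t₀) := by
      simp only
      constructor
      · rw [zero_smul, sub_zero, add_zero]; linarith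
      · exact hgrow
    obtain ⟨t, htmem, htval⟩ := hivt hc_mem
    simp only at htval
    have ht_pos : 0 < t := by
      rcases htmem.1.lt_or_eq with h | h
      · exact h
      · exfalso
        rw [← h, zero_smul, sub_zero, add_zero] at htval
        linarith
    have hy0 : t • z ≠ 0 := smul_ne_zero ht_pos.ne' hz0
    obtain ⟨hlam0, hg⟩ := hlam (t • z) hy0
    rw [htval] at hg
    have hcoef : lam (t • z) * t = 1 := by
      apply aux_eq ψ hψsconv m z hz0 (mul_nonneg hlam0 ht_pos.le) zero_le_one
      rw [one_smul, mul_smul, ← hg]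
      exact hz.symm
    refine ⟨t • z, htval, ?_⟩
    simp only
    rw [smul_smul, hcoef, one_smul]
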